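/- For any nonnegative integers n and m, the supremum over q ∈ (0,1) of ζ[2+n, {1}^m : q] equals the multiple zeta value ζ(2+n, {1}^m). That is, ‖ζ[2+n, {1}^m : q]‖ = ζ(2+n, {1}^m) in the sup norm on bounded functions on (0,1). -/

import Mathlib

open Finset Filter

/-- The q-integer [m:q] = (1-q^m)/(1-q). -/
noncomputable def qint (q : ℝ) (m : ℕ) : ℝ := (1 - q ^ m) / (1 - q)

/-- Tail of the multiple q-zeta value: sum over m₁ > ⋯ > m_d > n. -/
noncomputable def qZeta {d : ℕ} (q : ℝ) (k : Fin d → ℕ) (n : ℕ) : ℝ :=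
  ∑' m : {m : Fin d → ℕ // StrictAnti m ∧ ∀ i, n < m i},
    ∏ i, q ^ (m.1 i * (k i - 1)) / (qint q (m.1 i)) ^ (k i)

/-- The modified multiple q-zeta value ζ[k₁,…,k_d; r : q). -/
noncomputable def qZetaR {d : ℕ} (q : ℝ) (k : Fin d → ℕ) (r : ℕ) : ℝ :=
  ∑' m : {m : Fin (d + 1) → ℕ // StrictAnti m ∧ ∀ i, 0 < m i},
    (∏ i : Fin d, q ^ (m.1 i.castSucc * (k i - 1)) / (qint q (m.1 i.castSucc)) ^ (k i))
      / (m.1 (Fin.last d) : ℝ) ^ r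

/-- Multiple zeta value. -/
noncomputable def mzv {d : ℕ} (k : Fin d → ℕ) : ℝ :=
  ∑' m : {m : Fin d → ℕ // StrictAnti m ∧ ∀ i, 0 < m i},
    ∏ i, (1 : ℝ) / (m.1 i : ℝ) ^ (k i)

/-- Akhilesh's double tail of a multiple zeta value. -/
noncomputable def dtail {d : ℕ} (hd : 0 < d) (k : Fin d → ℕ) (p n : ℕ) : ℝ :=
  ∑' m : {m : Fin d → ℕ // StrictAnti m ∧ ∀ i, n < m i},
    ((Nat.choose (m.1 ⟨0, hd⟩ + p) p : ℝ))⁻¹ * ∏ i, (1 : ℝ) / (m.1 i : ℝ) ^ (k i)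


namespace S13

/-! ### q-integer basics -/

section Qint

variable {q : ℝ} (hq0 : 0 < q) (hq1 : q < 1)

include hq1 in
lemma qint_eq_geom (m : ℕ) : qint q m = ∑ j ∈ Finset.range m, q ^ j := by
  rw [geom_sum_eq (by linarith : q ≠ 1), qint]
  rw [show (1 : ℝ) - q ^ m = -(q ^ m - 1) by ring, show (1 : ℝ) - q = -(q - 1) by ring,
    neg_div_neg_eq]

include hq0 hq1 in
lemma qint_pos {m : ℕ} (hm : 1 ≤ m) : 0 < qint q m := by
  have h1 : q ^ m < 1 := pow_lt_one₀ hq0.le hq1 (by omega)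
  have h2 : (0:ℝ) < 1 - q := by linarith
  exact div_pos (by linarith) h2

lemma qint_add (hq1 : q ≠ 1) (m p : ℕ) : qint q (m + p) = qint q m + q ^ m * qint q p := by
  rw [qint, qint, qint, pow_add]
  have : (1:ℝ) - q ≠ 0 := by intro h; apply hq1; linarith
  field_simp
  ring

include hq0 hq1 in
lemma qint_le (m : ℕ) : qint q m ≤ m := by
  rw [qint_eq_geom hq1]
  calc ∑ j ∈ Finset.range m, q ^ j ≤ ∑ _j ∈ Finset.range m, (1:ℝ) :=
        Finset.sum_le_sum fun j _ => pow_le_one₀ hq0.le hq1.le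
    _ = m := by simp

include hq0 hq1 in
lemma qint_ge_mul_pow (m : ℕ) : (m : ℝ) * q ^ m ≤ qint q m := by
  rw [qint_eq_geom hq1]
  calc (m : ℝ) * q ^ m = ∑ _j ∈ Finset.range m, q ^ m := by simp [mul_comm]
    _ ≤ ∑ j ∈ Finset.range m, q ^ j := by
        refine Finset.sum_le_sum fun j hj => ?_
        exact pow_le_pow_of_le_one hq0.le hq1.le (Finset.mem_range.mp hj).le

include hq0 hq1 in
lemma qint_ge_one {m : ℕ} (hm : 1 ≤ m) : 1 ≤ qint q m := by
  obtain ⟨p, rfl⟩ := Nat.exists_eq_add_of_le hm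
  rw [qint_add (by linarith : q ≠ 1) 1 p]
  have h1 : qint q 1 = 1 := by rw [qint]; simp [div_self (show (1:ℝ) - q ≠ 0 by linarith)]
  have h0 : qint q 0 = 0 := by simp [qint]
  rcases Nat.eq_zero_or_pos p with hp | hp
  · subst hp; rw [h1, h0]; simp
  · have := qint_pos hq0 hq1 hp
    rw [h1]
    nlinarith [pow_pos hq0 1]

include hq0 hq1 in
/-- AM-GM: m² q^m ≤ [m]² -/
lemma qint_sq_amgm (m : ℕ) : (m : ℝ) ^ 2 * q ^ m ≤ (qint q m) ^ 2 := by
  set t := Real.sqrt q with ht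
  have ht0 : 0 < t := Real.sqrt_pos.mpr hq0
  have ht1 : t < 1 := by
    rw [ht, show (1:ℝ) = Real.sqrt 1 by simp]
    exact Real.sqrt_lt_sqrt hq0.le hq1
  have htq : t ^ 2 = q := Real.sq_sqrt hq0.le
  -- key : m * t^m ≤ qint q m
  have key : (m : ℝ) * t ^ m ≤ qint q m := by
    rw [qint_eq_geom hq1]
    have h2 : (2:ℝ) * ((m:ℝ) * t ^ m) ≤ 2 * ∑ j ∈ Finset.range m, q ^ j := by
      have refl : ∑ j ∈ Finset.range m, q ^ j = ∑ j ∈ Finset.range m, q ^ (m - 1 - j) := by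
        rw [Finset.sum_range_reflect]
      have hsum : (2:ℝ) * ∑ j ∈ Finset.range m, q ^ j
          = ∑ j ∈ Finset.range m, (q ^ j + q ^ (m - 1 - j)) := by
        rw [Finset.sum_add_distrib, ← refl]; ring
      rw [hsum]
      have hterm : ∀ j ∈ Finset.range m, 2 * t ^ m ≤ q ^ j + q ^ (m - 1 - j) := by
        intro j hj
        have hjm := Finset.mem_range.mp hj
        have e1 : q ^ j = (t ^ j) ^ 2 := by rw [← htq]; ring
        have e2 : q ^ (m - 1 - j) = (t ^ (m - 1 - j)) ^ 2 := by rw [← htq]; ring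
        have e3 : t ^ j * t ^ (m - 1 - j) = t ^ (m - 1) := by
          rw [← pow_add]; congr 1; omega
        have e4 : t ^ m ≤ t ^ (m - 1) :=
          pow_le_pow_of_le_one ht0.le ht1.le (by omega)
        nlinarith [sq_nonneg (t ^ j - t ^ (m - 1 - j))]
      calc (2:ℝ) * ((m:ℝ) * t ^ m) = ∑ _j ∈ Finset.range m, 2 * t ^ m := by
            simp [Finset.sum_const]; ring
        _ ≤ ∑ j ∈ Finset.range m, (q ^ j + q ^ (m - 1 - j)) := Finset.sum_le_sum hterm
    linarith
  have hq' : q ^ m = (t ^ m) ^ 2 := by rw [← htq]; ring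
  have hqi : 0 ≤ qint q m := by
    rcases Nat.eq_zero_or_pos m with hm | hm
    · simp [hm, qint]
    · exact (qint_pos hq0 hq1 hm).le
  have hmt : 0 ≤ (m:ℝ) * t ^ m := by positivity
  calc (m : ℝ) ^ 2 * q ^ m = ((m:ℝ) * t ^ m) ^ 2 := by rw [hq']; ring
    _ ≤ (qint q m) ^ 2 := by nlinarith

include hq0 hq1 in
/-- monotonicity of m ↦ m/[m] : [m'] * m ≤ [m] * m' for m ≤ m' -/
lemma qint_ratio_mono {m m' : ℕ} (hm : 1 ≤ m) (hmm : m ≤ m') :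
    qint q m' * m ≤ qint q m * m' := by
  obtain ⟨p, rfl⟩ := Nat.exists_eq_add_of_le hmm
  rw [qint_add (by linarith : q ≠ 1) m p]
  have h1 : qint q p ≤ p := qint_le hq0 hq1 p
  have h2 : (m:ℝ) * q ^ m ≤ qint q m := qint_ge_mul_pow hq0 hq1 m
  have h3 : (0:ℝ) ≤ q ^ m := (pow_pos hq0 m).le
  have h4 : 0 ≤ qint q p := by
    rcases Nat.eq_zero_or_pos p with hp | hp
    · simp [hp, qint]
    · exact (qint_pos hq0 hq1 hp).le
  have h5 : (0:ℝ) < m := by exact_mod_cast hm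
  have h6 : (0:ℝ) ≤ (p:ℝ) := Nat.cast_nonneg p
  have e1 : (m:ℝ) * q ^ m * qint q p ≤ ((m:ℝ) * q ^ m) * p :=
    mul_le_mul_of_nonneg_left h1 (by positivity)
  have e2 : (m:ℝ) * q ^ m * p ≤ qint q m * p := by nlinarith
  push_cast
  nlinarith

end Qint

/-! ### Abstract transport machinery -/

section Abstract

variable (c : ℝ) (L : ℕ → ℝ)

/-- factorial-like product -/
noncomputable def fL (n : ℕ) : ℝ := ∏ j ∈ Finset.range n, L (j + 1)

noncomputable def gq (m p : ℕ) : ℝ := fL L m * fL L p / fL L (m + p)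

noncomputable def Gq (m p : ℕ) : ℝ := c ^ (m * p) * gq L m p

variable (hc0 : 0 < c) (hc1 : c ≤ 1) (hL0 : L 0 = 0)
  (hLpos : ∀ m : ℕ, 1 ≤ m → 0 < L m)
  (hLadd : ∀ m p : ℕ, L (m + p) = L m + c ^ m * L p)
  (hLlim : Tendsto (fun B : ℕ => c ^ B / L (B + 1)) atTop (nhds 0))

include hLpos in
lemma fL_pos (n : ℕ) : 0 < fL L n := by
  refine Finset.prod_pos fun j _ => hLpos _ (by omega)

include hc0 hLadd hLpos in
lemma L_mono {m n : ℕ} (h : m ≤ n) : L m ≤ L n := by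
  obtain ⟨p, rfl⟩ := Nat.le.dest h
  rcases Nat.eq_zero_or_pos p with hp | hp
  · subst hp; rw [Nat.add_zero]
  · rw [hLadd]
    nlinarith [hLpos p hp, pow_pos hc0 m]

include hc0 hLadd hLpos hL0 in
lemma L_nonneg (m : ℕ) : 0 ≤ L m := by
  have := L_mono c L hc0 hLpos hLadd (Nat.zero_le m)
  rw [hL0] at this; exact this

include hc0 hLadd hLpos in
lemma gq_le_one (m p : ℕ) : gq L m p ≤ 1 := by
  have h1 : fL L (m + p) = fL L m * ∏ j ∈ Finset.range p, L (m + j + 1) := by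
    rw [fL, Finset.prod_range_add]; rfl
  have h2 : fL L p ≤ ∏ j ∈ Finset.range p, L (m + j + 1) := by
    refine Finset.prod_le_prod (fun j _ => (hLpos _ (by omega)).le) (fun j _ => ?_)
    exact L_mono c L hc0 hLpos hLadd (by omega)
  have hm := fL_pos L hLpos m
  have hp2 : (0:ℝ) < ∏ j ∈ Finset.range p, L (m + j + 1) :=
    Finset.prod_pos fun j _ => hLpos _ (by omega)
  rw [gq, div_le_one (by rw [h1]; exact mul_pos hm hp2), h1]
  nlinarith

include hLpos in
lemma gq_pos (m p : ℕ) : 0 < gq L m p := by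
  exact div_pos (mul_pos (fL_pos L hLpos m) (fL_pos L hLpos p)) (fL_pos L hLpos (m+p))

include hLpos in
lemma gq_zero_right (m : ℕ) : gq L m 0 = 1 := by
  rw [gq]
  rw [show fL L 0 = 1 by rw [fL]; simp, Nat.add_zero, mul_one]
  exact div_self (ne_of_gt (fL_pos L hLpos m))

lemma gq_symm (m p : ℕ) : gq L m p = gq L p m := by
  rw [gq, gq, Nat.add_comm, mul_comm]

lemma Gq_symm (m p : ℕ) : Gq c L m p = Gq c L p m := by
  rw [Gq, Gq, Nat.mul_comm, gq_symm]

include hLpos in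
lemma Gq_zero_right (m : ℕ) : Gq c L m 0 = 1 := by
  simp [Gq, gq_zero_right L hLpos]

include hLpos in
lemma gq_rec (m p : ℕ) : gq L m (p + 1) * L (m + p + 1) = gq L m p * L (p + 1) := by
  have hmp := fL_pos L hLpos (m + p)
  have hmp1 := fL_pos L hLpos (m + (p + 1))
  have e1 : fL L (p + 1) = fL L p * L (p + 1) := Finset.prod_range_succ _ _
  have e2 : fL L (m + (p + 1)) = fL L (m + p) * L (m + p + 1) := by
    rw [show m + (p + 1) = (m + p) + 1 by ring, fL, Finset.prod_range_succ]; rfl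
  have h1 := (fL_pos L hLpos (m + p)).ne'
  have h2 : L (m + p + 1) ≠ 0 := (hLpos _ (by omega)).ne'
  rw [gq, gq, e1, e2]
  field_simp

include hc0 hLpos hLadd in
lemma key_teles (m p : ℕ) :
    L m * (c ^ (m * (p + 1)) * gq L m (p + 1)) = c ^ m * (Gq c L m p - Gq c L m (p + 1)) * L (p + 1) := by
  have e1 : fL L (p + 1) = fL L p * L (p + 1) := Finset.prod_range_succ _ _
  have e2 : fL L (m + (p + 1)) = fL L (m + p) * L (m + (p+1)) := by
    rw [show m + (p + 1) = (m + p) + 1 by ring, fL, Finset.prod_range_succ]; rfl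
  have hadd : L (m + (p + 1)) = L m + c ^ m * L (p + 1) := hLadd m (p + 1)
  have hmp := (fL_pos L hLpos (m + p)).ne'
  have hLp1 : L (p + 1) ≠ 0 := (hLpos _ (by omega)).ne'
  have hcm : (0:ℝ) < c ^ m := pow_pos hc0 m
  have hden : L m + c ^ m * L (p + 1) ≠ 0 := by
    rw [← hadd, show m + (p+1) = (m + p) + 1 by ring]
    exact (hLpos _ (by omega)).ne'
  rw [Gq, Gq, gq, gq, e1, e2, hadd]
  rw [mul_comm (c ^ m) (L (p + 1))] at hden
  field_simp
  ring

include hc0 hLadd hLpos in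
lemma gq_le (m B : ℕ) (hm : 1 ≤ m) : gq L m B * L (B + 1) ≤ L 1 := by
  obtain ⟨k, rfl⟩ := Nat.exists_eq_add_of_le hm
  have e1 : fL L (1 + k) = L 1 * ∏ j ∈ Finset.range k, L (j + 2) := by
    rw [fL, Finset.prod_range_add]
    rw [Finset.prod_range_one]
    congr 1
    refine Finset.prod_congr rfl fun j _ => ?_
    congr 1
    omega
  have e2 : fL L (1 + k + B) = fL L B * L (B + 1) * ∏ j ∈ Finset.range k, L (B + j + 2) := by
    rw [show 1 + k + B = (B + 1) + k by ring, fL, Finset.prod_range_add, ← fL,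
      show fL L (B+1) = fL L B * L (B+1) from Finset.prod_range_succ _ _]
    congr 1
    refine Finset.prod_congr rfl fun j _ => ?_
    congr 1
    omega
  have hprod : (∏ j ∈ Finset.range k, L (j + 2)) ≤ ∏ j ∈ Finset.range k, L (B + j + 2) := by
    refine Finset.prod_le_prod (fun j _ => (hLpos _ (by omega)).le) (fun j _ => ?_)
    exact L_mono c L hc0 hLpos hLadd (by omega)
  have hB := fL_pos L hLpos B
  have hBL : 0 < L (B + 1) := hLpos _ (by omega)
  have hL1 : 0 < L 1 := hLpos _ le_rfl
  have hden := fL_pos L hLpos (1 + k + B)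
  rw [gq, div_mul_eq_mul_div, div_le_iff₀ hden, e1, e2]
  have hstep := mul_le_mul_of_nonneg_right (mul_le_mul_of_nonneg_left hprod hL1.le)
    (mul_nonneg hB.le hBL.le)
  calc L 1 * (∏ j ∈ Finset.range k, L (j + 2)) * fL L B * L (B + 1)
      = L 1 * (∏ j ∈ Finset.range k, L (j + 2)) * (fL L B * L (B + 1)) := by ring
    _ ≤ L 1 * (∏ j ∈ Finset.range k, L (B + j + 2)) * (fL L B * L (B + 1)) := hstep
    _ = L 1 * (fL L B * L (B + 1) * ∏ j ∈ Finset.range k, L (B + j + 2)) := by ring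

include hc0 hc1 hLadd hLpos hLlim in
lemma Glim (m : ℕ) (hm : 1 ≤ m) : Tendsto (fun B : ℕ => Gq c L m B) atTop (nhds 0) := by
  have h0 : ∀ B : ℕ, 0 ≤ Gq c L m B := fun B =>
    mul_nonneg (pow_nonneg hc0.le _) (gq_pos L hLpos m B).le
  have hub : ∀ B : ℕ, Gq c L m B ≤ (c ^ B / L (B + 1)) * L 1 := by
    intro B
    have h1 : c ^ (m * B) ≤ c ^ B := pow_le_pow_of_le_one hc0.le hc1 (Nat.le_mul_of_pos_left B (by omega))
    have h2 := gq_le c L hc0 hLpos hLadd m B hm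
    have hBL : 0 < L (B + 1) := hLpos _ (by omega)
    have h3 : gq L m B ≤ L 1 / L (B + 1) := by
      rw [le_div_iff₀ hBL]; exact h2
    have h4 : Gq c L m B ≤ c ^ B * (L 1 / L (B + 1)) := by
      rw [Gq]
      have := (gq_pos L hLpos m B).le
      have hcB : (0:ℝ) ≤ c ^ B := pow_nonneg hc0.le _
      calc c ^ (m * B) * gq L m B ≤ c ^ B * gq L m B := by nlinarith
        _ ≤ c ^ B * (L 1 / L (B + 1)) := by nlinarith [div_nonneg (hLpos 1 le_rfl).le hBL.le]
    calc Gq c L m B ≤ c ^ B * (L 1 / L (B + 1)) := h4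
      _ = (c ^ B / L (B + 1)) * L 1 := by ring
  have hlim2 : Tendsto (fun B : ℕ => (c ^ B / L (B + 1)) * L 1) atTop (nhds 0) := by
    simpa using hLlim.mul_const (L 1)
  exact squeeze_zero h0 hub hlim2

include hc0 hc1 hLadd hLpos hLlim in
lemma Treal (m b : ℕ) (hm : 1 ≤ m) :
    HasSum (fun i : ℕ => (1 / L (b + 1 + i)) * (c ^ (m * (b + 1 + i)) * gq L m (b + 1 + i)))
      ((c ^ m / L m) * Gq c L m b) := by
  have hnn : ∀ i : ℕ, 0 ≤ (1 / L (b + 1 + i)) * (c ^ (m * (b + 1 + i)) * gq L m (b + 1 + i)) :=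
    fun i => mul_nonneg (div_nonneg zero_le_one (hLpos _ (by omega)).le)
      (mul_nonneg (pow_nonneg hc0.le _) (gq_pos L hLpos _ _).le)
  rw [hasSum_iff_tendsto_nat_of_nonneg hnn]
  have hterm : ∀ i : ℕ, (1 / L (b + 1 + i)) * (c ^ (m * (b + 1 + i)) * gq L m (b + 1 + i))
      = (c ^ m / L m) * Gq c L m (b + i) - (c ^ m / L m) * Gq c L m (b + i + 1) := by
    intro i
    have hkey := key_teles c L hc0 hLpos hLadd m (b + i)
    have hLm : L m ≠ 0 := (hLpos m hm).ne'
    have hLp : L (b + i + 1) ≠ 0 := (hLpos _ (by omega)).ne'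
    have e : b + 1 + i = (b + i) + 1 := by ring
    rw [e]
    field_simp
    nlinarith [hkey]
  have hsum : ∀ N : ℕ, ∑ i ∈ Finset.range N,
      (1 / L (b + 1 + i)) * (c ^ (m * (b + 1 + i)) * gq L m (b + 1 + i))
      = (c ^ m / L m) * Gq c L m b - (c ^ m / L m) * Gq c L m (b + N) := by
    intro N
    have := Finset.sum_range_sub' (fun i => (c ^ m / L m) * Gq c L m (b + i)) N
    simp only [Nat.add_zero] at this
    rw [← this]
    refine Finset.sum_congr rfl fun i _ => ?_
    rw [hterm i, Nat.add_assoc]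
  simp only [hsum]
  have h1 : Tendsto (fun N : ℕ => Gq c L m (b + N)) atTop (nhds 0) := by
    have := (Glim c L hc0 hc1 hLpos hLadd hLlim m hm).comp (tendsto_add_atTop_nat b)
    simpa [Function.comp_def, Nat.add_comm] using this
  have := (tendsto_const_nhds (x := (c ^ m / L m) * Gq c L m b)).sub (h1.const_mul (c ^ m / L m))
  simpa using this

/-- shift equivalence -/
def shiftEquiv (b : ℕ) : ℕ ≃ {t : ℕ // b < t} where
  toFun := fun i => ⟨b + 1 + i, by omega⟩
  invFun := fun t => t.1 - (b + 1)
  left_inv := fun i => by simp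
  right_inv := fun t => by
    ext
    have := t.2
    simp
    omega

lemma shiftEquiv_apply (b i : ℕ) : ((shiftEquiv b) i).1 = b + 1 + i := rfl

/-- ENNReal versions -/
noncomputable def xE (m : ℕ) : ENNReal := ENNReal.ofReal (c ^ m / L m)
noncomputable def yE (m : ℕ) : ENNReal := ENNReal.ofReal (1 / L m)
noncomputable def GE (m p : ℕ) : ENNReal := ENNReal.ofReal (Gq c L m p)

lemma GE_symm (m p : ℕ) : GE c L m p = GE c L p m := by rw [GE, GE, Gq_symm]

include hLpos in
lemma GE_zero_right (m : ℕ) : GE c L m 0 = 1 := by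
  rw [GE, Gq_zero_right c L hLpos, ENNReal.ofReal_one]

include hc0 hc1 hLadd hLpos hLlim in
lemma TENN (m b : ℕ) (hm : 1 ≤ m) :
    xE c L m * GE c L m b = ∑' t : {t : ℕ // b < t}, yE L t * GE c L m t := by
  have he : ∀ t : {t : ℕ // b < t}, yE L t.1 * GE c L m t.1
      = ENNReal.ofReal ((1 / L t.1) * (c ^ (m * t.1) * gq L m t.1)) := by
    intro t
    rw [yE, GE, Gq, ← ENNReal.ofReal_mul (div_nonneg zero_le_one (hLpos t.1 (by omega)).le)]
  rw [← Equiv.tsum_eq (shiftEquiv b) (fun t => yE L t.1 * GE c L m t.1)]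
  have hT := Treal c L hc0 hc1 hLpos hLadd hLlim m b hm
  have hnn : ∀ i : ℕ, 0 ≤ (1 / L (b + 1 + i)) * (c ^ (m * (b + 1 + i)) * gq L m (b + 1 + i)) :=
    fun i => mul_nonneg (div_nonneg zero_le_one (hLpos _ (by omega)).le)
      (mul_nonneg (pow_nonneg hc0.le _) (gq_pos L hLpos _ _).le)
  calc xE c L m * GE c L m b
      = ENNReal.ofReal ((c ^ m / L m) * Gq c L m b) := by
        rw [xE, GE, ← ENNReal.ofReal_mul (div_nonneg (pow_nonneg hc0.le m) (hLpos m hm).le)]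
    _ = ENNReal.ofReal (∑' i : ℕ, (1 / L (b + 1 + i)) * (c ^ (m * (b + 1 + i)) * gq L m (b + 1 + i))) := by
        rw [hT.tsum_eq]
    _ = ∑' i : ℕ, ENNReal.ofReal ((1 / L (b + 1 + i)) * (c ^ (m * (b + 1 + i)) * gq L m (b + 1 + i))) :=
        ENNReal.ofReal_tsum_of_nonneg hnn hT.summable
    _ = ∑' i : ℕ, yE L ((shiftEquiv b) i).1 * GE c L m ((shiftEquiv b) i).1 := by
        refine tsum_congr fun i => ?_
        rw [he ((shiftEquiv b) i), shiftEquiv_apply]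

end Abstract

/-! ### Chains -/

def Chain (l : ℕ) := {f : Fin l → ℕ // StrictAnti f ∧ ∀ i, 0 < f i}

def hd : ∀ {l : ℕ}, Chain l → ℕ
  | 0, _ => 0
  | _ + 1, c => c.1 0

lemma hd_lt_all {l : ℕ} (c : Chain l) {t : ℕ} (ht : hd c < t) : ∀ i, c.1 i < t := by
  intro i
  cases l with
  | zero => exact i.elim0
  | succ k =>
    have : c.1 i ≤ c.1 0 := c.2.1.antitone (Fin.zero_le i)
    exact lt_of_le_of_lt this ht

lemma strictAnti_cons {l : ℕ} (f : Fin l → ℕ) (hf : StrictAnti f) (t : ℕ)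
    (ht : ∀ i, f i < t) : StrictAnti (Fin.cons t f : Fin (l+1) → ℕ) := by
  intro i j hij
  cases j using Fin.cases with
  | zero => exact absurd hij (by simp)
  | succ j' =>
    rw [Fin.cons_succ]
    cases i using Fin.cases with
    | zero => rw [Fin.cons_zero]; exact ht j'
    | succ i' =>
      rw [Fin.cons_succ]
      exact hf (by rwa [Fin.succ_lt_succ_iff] at hij)

/-- append an element larger than the head -/
def ccons {l : ℕ} (c : Chain l) (t : {t : ℕ // hd c < t}) : Chain (l+1) :=
  ⟨Fin.cons t.1 c.1, strictAnti_cons c.1 c.2.1 t.1 (hd_lt_all c t.2),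
    fun i => by
      cases i using Fin.cases with
      | zero => rw [Fin.cons_zero]; exact lt_of_le_of_lt (Nat.zero_le _) t.2
      | succ i' => rw [Fin.cons_succ]; exact c.2.2 i'⟩

lemma hd_ccons {l : ℕ} (c : Chain l) (t : {t : ℕ // hd c < t}) : hd (ccons c t) = t.1 := rfl

lemma hd_pos {l : ℕ} (c : Chain (l+1)) : 1 ≤ hd c := c.2.2 0

def ctail {l : ℕ} (c : Chain (l+1)) : Chain l :=
  ⟨Fin.tail c.1, fun i j hij => c.2.1 (by rwa [Fin.succ_lt_succ_iff]),
    fun i => c.2.2 i.succ⟩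

lemma hd_ctail_lt {l : ℕ} (c : Chain (l+1)) : hd (ctail c) < c.1 0 := by
  cases l with
  | zero => exact c.2.2 0
  | succ k => exact c.2.1 (show (0 : Fin (k+2)) < 1 by norm_num)

def peel {l : ℕ} : Chain (l+1) ≃ (c : Chain l) × {t : ℕ // hd c < t} where
  toFun d := ⟨ctail d, ⟨d.1 0, hd_ctail_lt d⟩⟩
  invFun p := ccons p.1 p.2
  left_inv d := Subtype.ext (Fin.cons_self_tail d.1)
  right_inv p := by
    obtain ⟨c, t⟩ := p
    dsimp only
    have h1 : ctail (ccons c t) = c := by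
      apply Subtype.ext
      funext i
      exact @Fin.cons_succ l (fun _ => ℕ) t.1 c.1 i
    refine Sigma.ext h1 ((Subtype.heq_iff_coe_eq ?_).mpr ?_)
    · dsimp only
      rw [h1]
      intro x; exact Iff.rfl
    · dsimp only
      exact @Fin.cons_zero l (fun _ => ℕ) t.1 c.1

instance : Unique (Chain 0) where
  default := ⟨Fin.elim0, fun i => i.elim0, fun i => i.elim0⟩
  uniq c := Subtype.ext (funext fun i => i.elim0)

lemma hd_chain_zero (c : Chain 0) : hd c = 0 := rfl

lemma tsum_chain_succ {l : ℕ} (f : Chain (l+1) → ENNReal) :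
    ∑' d : Chain (l+1), f d
      = ∑' (c : Chain l), ∑' (t : {t : ℕ // hd c < t}), f (ccons c t) := by
  rw [← Equiv.tsum_eq (peel (l := l)).symm f, ENNReal.tsum_sigma']
  rfl

lemma tsum_chain_zero (f : Chain 0 → ENNReal) : ∑' d : Chain 0, f d = f default :=
  tsum_eq_single default (fun c hc => absurd (Unique.uniq _ c) hc)

/-! ### States and duality -/

section States

variable (c : ℝ) (L : ℕ → ℝ)

noncomputable def WE {l : ℕ} (ch : Chain l) : ENNReal := ∏ i, yE L (ch.1 i)

lemma val_ccons_zero {l : ℕ} (ch : Chain l) (t : {t : ℕ // hd ch < t}) :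
    (ccons ch t).1 0 = t.1 := @Fin.cons_zero l (fun _ => ℕ) t.1 ch.1

lemma val_ccons_succ {l : ℕ} (ch : Chain l) (t : {t : ℕ // hd ch < t}) (i : Fin l) :
    (ccons ch t).1 i.succ = ch.1 i := @Fin.cons_succ l (fun _ => ℕ) t.1 ch.1 i

lemma WE_ccons {l : ℕ} (ch : Chain l) (t : {t : ℕ // hd ch < t}) :
    WE L (ccons ch t) = yE L t.1 * WE L ch := by
  rw [WE, WE, Fin.prod_univ_succ, val_ccons_zero ch t]
  congr 1

lemma WE_zero (ch : Chain 0) : WE L ch = 1 := by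
  rw [WE]
  simp

noncomputable def StA (e j b : ℕ) : ENNReal :=
  ∑' ch : Chain (b+1), ∑' d : Chain j,
    (xE c L (hd ch))^e * WE L ch * GE c L (hd ch) (hd d) * WE L d

noncomputable def StB (i k a : ℕ) : ENNReal :=
  ∑' ch : Chain k, ∑' d : Chain (a+1),
    WE L ch * GE c L (hd ch) (hd d) * (xE c L (hd d))^i * WE L d

noncomputable def ZE (a b : ℕ) : ENNReal :=
  ∑' ch : Chain (b+1), (xE c L (hd ch))^(a+1) * WE L ch

variable (hc0 : 0 < c) (hc1 : c ≤ 1)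
  (hLpos : ∀ m : ℕ, 1 ≤ m → 0 < L m)
  (hLadd : ∀ m p : ℕ, L (m + p) = L m + c ^ m * L p)
  (hLlim : Tendsto (fun B : ℕ => c ^ B / L (B + 1)) atTop (nhds 0))

include hc0 hc1 hLpos hLadd hLlim in
lemma StA_step (e j b : ℕ) : StA c L (e+1) j b = StA c L e (j+1) b := by
  rw [StA, StA]
  refine tsum_congr fun ch => ?_
  rw [tsum_chain_succ (fun d => (xE c L (hd ch))^e * WE L ch * GE c L (hd ch) (hd d) * WE L d)]
  refine tsum_congr fun d => ?_
  have hT := TENN c L hc0 hc1 hLpos hLadd hLlim (hd ch) (hd d) (hd_pos ch)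
  calc (xE c L (hd ch))^(e+1) * WE L ch * GE c L (hd ch) (hd d) * WE L d
      = ((xE c L (hd ch))^e * WE L ch * WE L d) * (xE c L (hd ch) * GE c L (hd ch) (hd d)) := by
        rw [pow_succ]; ring
    _ = ((xE c L (hd ch))^e * WE L ch * WE L d)
          * (∑' t : {t : ℕ // hd d < t}, yE L t * GE c L (hd ch) t) := by rw [hT]
    _ = ∑' t : {t : ℕ // hd d < t},
          ((xE c L (hd ch))^e * WE L ch * WE L d) * (yE L t * GE c L (hd ch) t) := by
        rw [ENNReal.tsum_mul_left]
    _ = ∑' t : {t : ℕ // hd d < t},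
          (xE c L (hd ch))^e * WE L ch * GE c L (hd ch) (hd (ccons d t)) * WE L (ccons d t) := by
        refine tsum_congr fun t => ?_
        rw [hd_ccons, WE_ccons]
        ring

include hc0 hc1 hLpos hLadd hLlim in
lemma StB_step (i k a : ℕ) : StB c L i (k+1) a = StB c L (i+1) k a := by
  rw [StB, StB]
  rw [tsum_chain_succ (fun ch => ∑' d : Chain (a+1),
    WE L ch * GE c L (hd ch) (hd d) * (xE c L (hd d))^i * WE L d)]
  refine tsum_congr fun ch => ?_
  rw [ENNReal.tsum_comm]
  refine tsum_congr fun d => ?_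
  have hT := TENN c L hc0 hc1 hLpos hLadd hLlim (hd d) (hd ch) (hd_pos d)
  calc ∑' t : {t : ℕ // hd ch < t},
        WE L (ccons ch t) * GE c L (hd (ccons ch t)) (hd d) * (xE c L (hd d))^i * WE L d
      = ∑' t : {t : ℕ // hd ch < t},
          (WE L ch * (xE c L (hd d))^i * WE L d) * (yE L t * GE c L (hd d) t) := by
        refine tsum_congr fun t => ?_
        rw [WE_ccons, hd_ccons, GE_symm c L t.1 (hd d)]
        ring
    _ = (WE L ch * (xE c L (hd d))^i * WE L d)
          * (∑' t : {t : ℕ // hd ch < t}, yE L t * GE c L (hd d) t) := by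
        rw [ENNReal.tsum_mul_left]
    _ = (WE L ch * (xE c L (hd d))^i * WE L d) * (xE c L (hd d) * GE c L (hd d) (hd ch)) := by
        rw [hT]
    _ = WE L ch * GE c L (hd ch) (hd d) * (xE c L (hd d))^(i+1) * WE L d := by
        rw [GE_symm c L (hd d) (hd ch), pow_succ]
        ring

include hLpos in
lemma StA_zero (a b : ℕ) : StA c L (a+1) 0 b = ZE c L a b := by
  rw [StA, ZE]
  refine tsum_congr fun ch => ?_
  rw [tsum_chain_zero]
  rw [WE_zero, hd_chain_zero, GE_zero_right c L hLpos, mul_one, mul_one]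

lemma StA_eq_StB (a b : ℕ) : StA c L 0 (a+1) b = StB c L 0 (b+1) a := by
  rw [StA, StB]
  refine tsum_congr fun ch => tsum_congr fun d => ?_
  rw [pow_zero, pow_zero]
  ring

include hLpos in
lemma StB_end (a b : ℕ) : StB c L (b+1) 0 a = ZE c L b a := by
  rw [StB, ZE]
  rw [tsum_chain_zero]
  refine tsum_congr fun d => ?_
  rw [WE_zero, hd_chain_zero, GE_symm, GE_zero_right c L hLpos]
  ring

include hc0 hc1 hLpos hLadd hLlim in
lemma StA_iter (n : ℕ) : ∀ e j b : ℕ, StA c L (e+n) j b = StA c L e (j+n) b := by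
  induction n with
  | zero => intro e j b; rfl
  | succ n ih =>
    intro e j b
    have h1 : e + (n+1) = (e + n) + 1 := by omega
    rw [h1, ← Nat.add_assoc]
    calc StA c L (e + n + 1) j b = StA c L (e+n) (j+1) b :=
          StA_step c L hc0 hc1 hLpos hLadd hLlim _ _ _
      _ = StA c L e (j+1+n) b := ih e (j+1) b
      _ = StA c L e (j+n+1) b := by rw [show j+1+n = j+n+1 by omega]

include hc0 hc1 hLpos hLadd hLlim in
lemma StB_iter (n : ℕ) : ∀ i k a : ℕ, StB c L i (k+n) a = StB c L (i+n) k a := by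
  induction n with
  | zero => intro i k a; rfl
  | succ n ih =>
    intro i k a
    calc StB c L i (k+(n+1)) a = StB c L i ((k+1)+n) a := by rw [show k+(n+1) = k+1+n by omega]
      _ = StB c L (i+n) (k+1) a := ih i (k+1) a
      _ = StB c L (i+n+1) k a := StB_step c L hc0 hc1 hLpos hLadd hLlim _ _ _
      _ = StB c L (i+(n+1)) k a := by rw [show i+n+1 = i+(n+1) by omega]

include hc0 hc1 hLpos hLadd hLlim in
theorem ZE_duality (a b : ℕ) : ZE c L a b = ZE c L b a := by
  calc ZE c L a b = StA c L (a+1) 0 b := (StA_zero c L hLpos a b).symm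
    _ = StA c L (0+(a+1)) 0 b := by rw [Nat.zero_add]
    _ = StA c L 0 (0+(a+1)) b := StA_iter c L hc0 hc1 hLpos hLadd hLlim (a+1) 0 0 b
    _ = StA c L 0 (a+1) b := by rw [Nat.zero_add]
    _ = StB c L 0 (b+1) a := StA_eq_StB c L a b
    _ = StB c L 0 (0+(b+1)) a := by rw [Nat.zero_add]
    _ = StB c L (0+(b+1)) 0 a := StB_iter c L hc0 hc1 hLpos hLadd hLlim (b+1) 0 0 a
    _ = StB c L (b+1) 0 a := by rw [Nat.zero_add]
    _ = ZE c L b a := StB_end c L hLpos a b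

end States

/-! ### Instantiations -/

section Inst

variable {q : ℝ} (hq0 : 0 < q) (hq1 : q < 1)

include hq0 hq1 in
lemma qL_lim : Tendsto (fun B : ℕ => q ^ B / qint q (B + 1)) atTop (nhds 0) := by
  have h0 : ∀ B : ℕ, 0 ≤ q ^ B / qint q (B + 1) := fun B =>
    div_nonneg (pow_nonneg hq0.le _) (qint_pos hq0 hq1 (by omega)).le
  have hub : ∀ B : ℕ, q ^ B / qint q (B + 1) ≤ q ^ B := fun B => by
    rw [div_le_iff₀ (qint_pos hq0 hq1 (by omega))]
    nlinarith [qint_ge_one hq0 hq1 (show 1 ≤ B + 1 by omega), pow_nonneg hq0.le B]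
  exact squeeze_zero h0 hub (tendsto_pow_atTop_nhds_zero_of_lt_one hq0.le hq1)

lemma cL_lim : Tendsto (fun B : ℕ => (1:ℝ) ^ B / ((B + 1 : ℕ) : ℝ)) atTop (nhds 0) := by
  have : ∀ B : ℕ, (1:ℝ) ^ B / ((B + 1 : ℕ) : ℝ) = 1 / ((B : ℝ) + 1) := fun B => by
    rw [one_pow]; push_cast; ring_nf
  simp only [this]
  exact tendsto_one_div_add_atTop_nhds_zero_nat

lemma cL_pos : ∀ m : ℕ, 1 ≤ m → 0 < ((m : ℕ) : ℝ) := fun m hm => by exact_mod_cast hm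

lemma cL_add : ∀ m p : ℕ, ((m + p : ℕ) : ℝ) = ((m : ℕ) : ℝ) + 1 ^ m * ((p : ℕ) : ℝ) := by
  intro m p; push_cast; ring

include hq0 hq1 in
theorem qZE_duality (a b : ℕ) : ZE q (qint q) a b = ZE q (qint q) b a :=
  ZE_duality q (qint q) hq0 hq1.le (fun m hm => qint_pos hq0 hq1 hm)
    (qint_add (ne_of_lt hq1)) (qL_lim hq0 hq1) a b

theorem cZE_duality (a b : ℕ) : ZE 1 (Nat.cast) a b = ZE 1 (Nat.cast) b a :=
  ZE_duality 1 Nat.cast one_pos le_rfl cL_pos cL_add cL_lim a b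

/-! ### Termwise comparison -/

include hq0 hq1 in
lemma scalar_ineq (a b h : ℕ) (hh : 1 ≤ h) (hba : b ≤ a) :
    q ^ (h * (a + 1)) * (h : ℝ) ^ (a + b + 2) ≤ (qint q h) ^ (a + b + 2) := by
  have hH := qint_pos hq0 hq1 hh
  have hh' : (0:ℝ) < h := by exact_mod_cast hh
  have amgm := qint_sq_amgm hq0 hq1 h
  have A : ((h:ℝ) ^ 2 * q ^ h) ^ (a + 1) ≤ ((qint q h) ^ 2) ^ (a + 1) :=
    pow_le_pow_left₀ (by positivity) amgm (a + 1)
  have B : (qint q h) ^ (a - b) ≤ (h : ℝ) ^ (a - b) :=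
    pow_le_pow_left₀ hH.le (qint_le hq0 hq1 h) _
  have e : (a + b + 2) + (a - b) = 2 * (a + 1) := by omega
  have key : q ^ (h * (a + 1)) * (h : ℝ) ^ (a + b + 2) * (qint q h) ^ (a - b)
      ≤ (qint q h) ^ (a + b + 2) * (qint q h) ^ (a - b) := by
    calc q ^ (h * (a + 1)) * (h : ℝ) ^ (a + b + 2) * (qint q h) ^ (a - b)
        ≤ q ^ (h * (a + 1)) * (h : ℝ) ^ (a + b + 2) * (h : ℝ) ^ (a - b) := by
          refine mul_le_mul_of_nonneg_left B (by positivity)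
      _ = ((h:ℝ) ^ 2 * q ^ h) ^ (a + 1) := by
          rw [mul_assoc, ← pow_add, e, mul_pow, ← pow_mul, ← pow_mul]
          ring
      _ ≤ ((qint q h) ^ 2) ^ (a + 1) := A
      _ = (qint q h) ^ (a + b + 2) * (qint q h) ^ (a - b) := by
          rw [← pow_add, e, pow_mul]
  exact le_of_mul_le_mul_right key (pow_pos hH _)

include hq0 hq1 in
lemma term_le (a b : ℕ) (hba : b ≤ a) (ch : Chain (b + 1)) :
    (q ^ (hd ch) / qint q (hd ch)) ^ (a + 1) * ∏ i, (1 / qint q (ch.1 i))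
      ≤ ((1:ℝ) / (hd ch : ℝ)) ^ (a + 1) * ∏ i, (1 / (ch.1 i : ℝ)) := by
  set h := hd ch with hh
  have hh1 : 1 ≤ h := hd_pos ch
  have hH := qint_pos hq0 hq1 hh1
  have hh' : (0:ℝ) < h := by exact_mod_cast hh1
  have hmem : ∀ i : Fin (b + 1), 1 ≤ ch.1 i := fun i => ch.2.2 i
  have hle : ∀ i : Fin (b + 1), ch.1 i ≤ h := fun i => ch.2.1.antitone (Fin.zero_le i)
  -- step 1 : ∏ 1/[m] ≤ ∏ (h/([h]*m))
  have step1 : (∏ i, (1 / qint q (ch.1 i)))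
      ≤ ∏ i, ((h : ℝ) / (qint q h * (ch.1 i : ℝ))) := by
    refine Finset.prod_le_prod (fun i _ => ?_) (fun i _ => ?_)
    · exact (one_div_nonneg).mpr (qint_pos hq0 hq1 (hmem i)).le
    · have hrat := qint_ratio_mono hq0 hq1 (hmem i) (hle i)
      have hmi := qint_pos hq0 hq1 (hmem i)
      have hmi' : (0:ℝ) < (ch.1 i : ℝ) := by exact_mod_cast hmem i
      rw [div_le_div_iff₀ hmi (by positivity)]
      nlinarith
  have step2 : (∏ i, ((h : ℝ) / (qint q h * (ch.1 i : ℝ))))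
      = ((h:ℝ) / qint q h) ^ (b + 1) * ∏ i, (1 / (ch.1 i : ℝ)) := by
    have hfac : ∀ i : Fin (b+1), (h : ℝ) / (qint q h * (ch.1 i : ℝ))
        = ((h:ℝ) / qint q h) * (1 / (ch.1 i : ℝ)) := fun i => by
      rw [div_mul_div_comm, mul_one]
    simp only [hfac]
    rw [Finset.prod_mul_distrib, Finset.prod_const, Finset.card_univ, Fintype.card_fin]
  have hsc := scalar_ineq hq0 hq1 a b h hh1 hba
  have hprod0 : (0:ℝ) ≤ ∏ i, (1/(ch.1 i:ℝ)) := Finset.prod_nonneg fun i _ => by positivity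
  have hmain : (q ^ h / qint q h) ^ (a+1) * ((h:ℝ)/qint q h) ^ (b+1) ≤ ((1:ℝ)/(h:ℝ)) ^ (a+1) := by
    rw [div_pow, div_pow, div_pow, div_mul_div_comm,
      div_le_div_iff₀ (by positivity) (by positivity)]
    have e1 : (q^h)^(a+1) = q^(h*(a+1)) := (pow_mul q h (a+1)).symm
    have e2 : (h:ℝ)^(b+1) * (h:ℝ)^(a+1) = (h:ℝ)^(a+b+2) := by
      rw [← pow_add]; congr 1; omega
    have e3 : qint q h^(a+1) * qint q h^(b+1) = qint q h^(a+b+2) := by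
      rw [← pow_add]; congr 1; omega
    calc (q^h)^(a+1) * (h:ℝ)^(b+1) * ((h:ℝ)^(a+1))
        = q^(h*(a+1)) * (h:ℝ)^(a+b+2) := by rw [e1, mul_assoc, e2]
      _ ≤ qint q h^(a+b+2) := hsc
      _ = 1^(a+1) * (qint q h^(a+1) * qint q h^(b+1)) := by rw [e3, one_pow, one_mul]
  calc (q ^ h / qint q h) ^ (a + 1) * ∏ i, (1 / qint q (ch.1 i))
      ≤ (q ^ h / qint q h) ^ (a+1) * (((h:ℝ)/qint q h) ^ (b+1) * ∏ i, (1 / (ch.1 i : ℝ))) :=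
        mul_le_mul_of_nonneg_left (step1.trans step2.le) (by positivity)
    _ = ((q ^ h / qint q h) ^ (a+1) * ((h:ℝ)/qint q h) ^ (b+1)) * ∏ i, (1/(ch.1 i:ℝ)) := by
        ring
    _ ≤ ((1:ℝ)/(h:ℝ))^(a+1) * ∏ i, (1/(ch.1 i:ℝ)) := mul_le_mul_of_nonneg_right hmain hprod0

lemma WE_eq_ofReal {l : ℕ} (L : ℕ → ℝ) (hL : ∀ m : ℕ, 0 ≤ 1 / L m) (ch : Chain l) :
    WE L ch = ENNReal.ofReal (∏ i, (1 / L (ch.1 i))) := by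
  rw [WE, ENNReal.ofReal_prod_of_nonneg (fun i _ => hL _)]
  exact Finset.prod_congr rfl fun i _ => by rw [yE]

include hq0 hq1 in
lemma ZE_le_ZE_of (a b : ℕ) (hba : b ≤ a) :
    ZE q (qint q) a b ≤ ZE 1 Nat.cast a b := by
  rw [ZE, ZE]
  refine ENNReal.tsum_le_tsum fun ch => ?_
  have hh1 : 1 ≤ hd ch := hd_pos ch
  have hH := qint_pos hq0 hq1 hh1
  have hh' : (0:ℝ) < (hd ch : ℝ) := by exact_mod_cast hh1
  have hqL : ∀ m : ℕ, 0 ≤ 1 / qint q m := by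
    intro m
    rcases Nat.eq_zero_or_pos m with hm | hm
    · simp [hm, qint]
    · exact (one_div_nonneg).mpr (qint_pos hq0 hq1 hm).le
  have hcL : ∀ m : ℕ, 0 ≤ 1 / ((m : ℕ) : ℝ) := fun m => by positivity
  have lhs_eq : (xE q (qint q) (hd ch))^(a+1) * WE (qint q) ch
      = ENNReal.ofReal ((q ^ (hd ch) / qint q (hd ch)) ^ (a+1) * ∏ i, (1 / qint q (ch.1 i))) := by
    rw [xE, ← ENNReal.ofReal_pow (by positivity), WE_eq_ofReal (qint q) hqL,
      ← ENNReal.ofReal_mul (by positivity)]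
  have rhs_eq : (xE 1 Nat.cast (hd ch))^(a+1) * WE Nat.cast ch
      = ENNReal.ofReal (((1:ℝ) / (hd ch : ℝ)) ^ (a+1) * ∏ i, (1 / (ch.1 i : ℝ))) := by
    rw [xE, one_pow, ← ENNReal.ofReal_pow (by positivity), WE_eq_ofReal Nat.cast hcL,
      ← ENNReal.ofReal_mul (by positivity)]
  rw [lhs_eq, rhs_eq]
  exact ENNReal.ofReal_le_ofReal (term_le hq0 hq1 a b hba ch)

include hq0 hq1 in
theorem qZE_le_cZE (a b : ℕ) : ZE q (qint q) a b ≤ ZE 1 Nat.cast a b := by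
  rcases le_or_gt b a with hba | hab
  · exact ZE_le_ZE_of hq0 hq1 a b hba
  · calc ZE q (qint q) a b = ZE q (qint q) b a := qZE_duality hq0 hq1 a b
      _ ≤ ZE 1 Nat.cast b a := ZE_le_ZE_of hq0 hq1 b a (le_of_lt hab)
      _ = ZE 1 Nat.cast a b := cZE_duality b a

/-! ### Finiteness of the classical sum -/

lemma yE_cast_le_one (t : ℕ) : yE Nat.cast t ≤ 1 := by
  rw [yE]
  refine ENNReal.ofReal_le_one.mpr ?_
  rcases Nat.eq_zero_or_pos t with ht | ht
  · simp [ht]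
  · rw [div_le_one (by exact_mod_cast ht)]
    exact_mod_cast ht

lemma yE_cast_mono {s t : ℕ} (hs : 1 ≤ s) (hst : s ≤ t) : yE Nat.cast t ≤ yE Nat.cast s := by
  rw [yE, yE]
  refine ENNReal.ofReal_le_ofReal ?_
  have h1 : (0:ℝ) < s := by exact_mod_cast hs
  have h2 : (0:ℝ) < t := by exact_mod_cast lt_of_lt_of_le hs hst
  rw [div_le_div_iff₀ h2 h1]
  have : (s:ℝ) ≤ t := by exact_mod_cast hst
  linarith

noncomputable def Z2 : ENNReal := ∑' t : {t : ℕ // 0 < t}, (yE Nat.cast t.1) ^ 2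

lemma Z2_ne_top : Z2 ≠ ⊤ := by
  rw [Z2, ← Equiv.tsum_eq (shiftEquiv 0) (fun t => (yE Nat.cast t.1) ^ 2)]
  have heq : ∀ i : ℕ, (yE Nat.cast ((shiftEquiv 0) i).1) ^ 2
      = ENNReal.ofReal ((1 / ((0 + 1 + i : ℕ) : ℝ)) ^ 2) := by
    intro i
    rw [shiftEquiv_apply, yE, ENNReal.ofReal_pow (by positivity)]
  simp only [heq]
  have hsum : Summable (fun i : ℕ => (1 / ((0 + 1 + i : ℕ) : ℝ)) ^ 2) := by
    have hs : Summable (fun n : ℕ => 1 / ((n : ℝ)) ^ 2) :=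
      Real.summable_one_div_nat_pow.mpr one_lt_two
    have := (summable_nat_add_iff 1).mpr hs
    refine this.congr fun i => ?_
    rw [div_pow, one_pow]
    congr 2
    push_cast
    ring
  rw [← ENNReal.ofReal_tsum_of_nonneg (fun i => by positivity) hsum]
  exact ENNReal.ofReal_ne_top

lemma cZE_fin : ∀ b : ℕ, ∀ a : ℕ, b ≤ a →
    (∑' ch : Chain (b+1), (yE Nat.cast (hd ch))^(a+1) * WE Nat.cast ch) ≠ ⊤ := by
  intro b
  induction b with
  | zero =>
    intro a _
    rw [tsum_chain_succ (fun ch => (yE Nat.cast (hd ch))^(a+1) * WE Nat.cast ch),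
      tsum_chain_zero]
    have hle : ∀ t : {t : ℕ // hd (default : Chain 0) < t},
        (yE Nat.cast (hd (ccons default t)))^(a+1) * WE Nat.cast (ccons default t)
          ≤ (yE Nat.cast t.1) ^ 2 := by
      intro t
      rw [hd_ccons, WE_ccons, WE_zero, mul_one]
      have : (yE Nat.cast t.1)^(a+1) * yE Nat.cast t.1 = (yE Nat.cast t.1)^(a+2) := by
        rw [← pow_succ]
      rw [this]
      exact pow_le_pow_of_le_one zero_le (yE_cast_le_one t.1) (by omega)
    refine ne_top_of_le_ne_top Z2_ne_top ?_
    calc (∑' t : {t : ℕ // hd (default : Chain 0) < t},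
            (yE Nat.cast (hd (ccons default t)))^(a+1) * WE Nat.cast (ccons default t))
        ≤ ∑' t : {t : ℕ // hd (default : Chain 0) < t}, (yE Nat.cast t.1) ^ 2 :=
          ENNReal.tsum_le_tsum hle
      _ ≤ Z2 := by
          rw [Z2]
          exact ENNReal.tsum_comp_le_tsum_of_injective
            (f := fun t : {t : ℕ // hd (default : Chain 0) < t} =>
              (⟨t.1, t.2⟩ : {t : ℕ // 0 < t}))
            (fun s t hst => Subtype.ext (show s.1 = t.1 from congrArg Subtype.val hst))
            (fun t => (yE Nat.cast t.1) ^ 2)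
  | succ b ih =>
    intro a ha
    rw [tsum_chain_succ (fun ch => (yE Nat.cast (hd ch))^(a+1) * WE Nat.cast ch)]
    have hbound : ∀ (c' : Chain (b+1)) (t : {t : ℕ // hd c' < t}),
        (yE Nat.cast (hd (ccons c' t)))^(a+1) * WE Nat.cast (ccons c' t)
          ≤ (yE Nat.cast t.1)^2 * ((yE Nat.cast (hd c'))^a * WE Nat.cast c') := by
      intro c' t
      rw [hd_ccons, WE_ccons]
      have e1 : (yE Nat.cast t.1)^(a+1) * (yE Nat.cast t.1 * WE Nat.cast c')
          = ((yE Nat.cast t.1)^2 * (yE Nat.cast t.1)^a) * WE Nat.cast c' := by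
        have h2a : (a+1)+1 = 2+a := by omega
        calc (yE Nat.cast t.1)^(a+1) * (yE Nat.cast t.1 * WE Nat.cast c')
            = (yE Nat.cast t.1)^((a+1)+1) * WE Nat.cast c' := by rw [pow_succ]; ring
          _ = ((yE Nat.cast t.1)^2 * (yE Nat.cast t.1)^a) * WE Nat.cast c' := by
              rw [h2a, pow_add]
      rw [e1]
      have e2 : (yE Nat.cast t.1)^a ≤ (yE Nat.cast (hd c'))^a :=
        pow_le_pow_left' (yE_cast_mono (hd_pos c') (le_of_lt t.2)) _
      calc ((yE Nat.cast t.1)^2 * (yE Nat.cast t.1)^a) * WE Nat.cast c'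
          ≤ ((yE Nat.cast t.1)^2 * (yE Nat.cast (hd c'))^a) * WE Nat.cast c' := by
            exact mul_le_mul_left (mul_le_mul_right e2 _) _
        _ = (yE Nat.cast t.1)^2 * ((yE Nat.cast (hd c'))^a * WE Nat.cast c') := by ring
    have htop : Z2 * (∑' (c' : Chain (b+1)), (yE Nat.cast (hd c'))^a * WE Nat.cast c') ≠ ⊤ := by
      refine ENNReal.mul_ne_top Z2_ne_top ?_
      have haa : a = (a - 1) + 1 := by omega
      rw [haa]
      exact ih (a - 1) (by omega)
    refine ne_top_of_le_ne_top htop ?_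
    calc (∑' (c' : Chain (b+1)) (t : {t : ℕ // hd c' < t}),
            (yE Nat.cast (hd (ccons c' t)))^(a+1) * WE Nat.cast (ccons c' t))
        ≤ ∑' (c' : Chain (b+1)) (t : {t : ℕ // hd c' < t}),
            (yE Nat.cast t.1)^2 * ((yE Nat.cast (hd c'))^a * WE Nat.cast c') :=
          ENNReal.tsum_le_tsum fun c' => ENNReal.tsum_le_tsum fun t => hbound c' t
      _ = ∑' (c' : Chain (b+1)),
            (∑' (t : {t : ℕ // hd c' < t}), (yE Nat.cast t.1)^2)
              * ((yE Nat.cast (hd c'))^a * WE Nat.cast c') := by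
          refine tsum_congr fun c' => ?_
          rw [ENNReal.tsum_mul_right]
      _ ≤ ∑' (c' : Chain (b+1)), Z2 * ((yE Nat.cast (hd c'))^a * WE Nat.cast c') := by
          refine ENNReal.tsum_le_tsum fun c' => ?_
          refine mul_le_mul_left ?_ _
          rw [Z2]
          exact ENNReal.tsum_comp_le_tsum_of_injective
            (f := fun t : {t : ℕ // hd c' < t} =>
              (⟨t.1, lt_of_le_of_lt (Nat.zero_le _) t.2⟩ : {t : ℕ // 0 < t}))
            (fun s t hst => Subtype.ext (by simpa using congrArg Subtype.val hst))
            (fun t => (yE Nat.cast t.1) ^ 2)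
      _ = Z2 * ∑' (c' : Chain (b+1)), (yE Nat.cast (hd c'))^a * WE Nat.cast c' := by
          rw [ENNReal.tsum_mul_left]

lemma xE_one (t : ℕ) : xE 1 Nat.cast t = yE Nat.cast t := by rw [xE, yE, one_pow]

lemma cZE_ne_top (a b : ℕ) : ZE 1 Nat.cast a b ≠ ⊤ := by
  have key : ∀ a b : ℕ, b ≤ a → ZE 1 Nat.cast a b ≠ ⊤ := by
    intro a b hba
    rw [ZE]
    have : ∀ ch : Chain (b+1), (xE 1 Nat.cast (hd ch))^(a+1) * WE Nat.cast ch
        = (yE Nat.cast (hd ch))^(a+1) * WE Nat.cast ch := fun ch => by rw [xE_one]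
    rw [tsum_congr this]
    exact cZE_fin b a hba
  rcases le_or_gt b a with hba | hab
  · exact key a b hba
  · rw [cZE_duality a b]
    exact key b a (le_of_lt hab)

/-! ### Endpoint matching -/

include hq0 hq1 in
lemma qterm_eq (n m : ℕ) (ch : Chain (m+1)) :
    (q ^ (hd ch) / qint q (hd ch)) ^ (n+1) * ∏ i, (1 / qint q (ch.1 i))
      = ∏ i, q ^ (ch.1 i * ((Fin.cons (2+n) (fun _ : Fin m => 1) : Fin (m+1) → ℕ) i - 1))
          / (qint q (ch.1 i)) ^ ((Fin.cons (2+n) (fun _ : Fin m => 1) : Fin (m+1) → ℕ) i) := by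
  rw [Fin.prod_univ_succ, Fin.prod_univ_succ]
  simp only [Fin.cons_zero, Fin.cons_succ]
  have hH := qint_pos hq0 hq1 (hd_pos ch)
  have e0 : hd ch = ch.1 0 := rfl
  have e1 : ∀ i : Fin m, q ^ (ch.1 i.succ * (1 - 1)) / (qint q (ch.1 i.succ)) ^ 1
      = 1 / qint q (ch.1 i.succ) := by
    intro i
    norm_num
  rw [Finset.prod_congr rfl fun i _ => e1 i]
  have e2 : q ^ (ch.1 0 * (2 + n - 1)) / (qint q (ch.1 0)) ^ (2 + n)
      = (q ^ (ch.1 0) / qint q (ch.1 0)) ^ (n+1) * (1 / qint q (ch.1 0)) := by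
    have h1 : 2 + n - 1 = n + 1 := by omega
    have h2 : 2 + n = (n + 1) + 1 := by omega
    rw [h1, h2, div_pow, ← pow_mul, pow_succ]
    rw [div_mul_div_comm, mul_one, mul_comm (ch.1 0) (n+1)]
  simp only [e0]
  rw [e2]
  ring

include hq0 hq1 in
lemma ZE_q_repr (n m : ℕ) : ZE q (qint q) n m
    = ∑' ch : Chain (m+1), ENNReal.ofReal
        (∏ i, q ^ (ch.1 i * ((Fin.cons (2+n) (fun _ : Fin m => 1) : Fin (m+1) → ℕ) i - 1))
          / (qint q (ch.1 i)) ^ ((Fin.cons (2+n) (fun _ : Fin m => 1) : Fin (m+1) → ℕ) i)) := by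
  rw [ZE]
  refine tsum_congr fun ch => ?_
  have hH := qint_pos hq0 hq1 (hd_pos ch)
  have hqL : ∀ m' : ℕ, 0 ≤ 1 / qint q m' := by
    intro m'
    rcases Nat.eq_zero_or_pos m' with hm | hm
    · simp [hm, qint]
    · exact (one_div_nonneg).mpr (qint_pos hq0 hq1 hm).le
  rw [xE, ← ENNReal.ofReal_pow (by positivity), WE_eq_ofReal (qint q) hqL,
    ← ENNReal.ofReal_mul (by positivity), qterm_eq hq0 hq1 n m ch]

lemma cterm_eq (n m : ℕ) (ch : Chain (m+1)) :
    ((1:ℝ) / (hd ch : ℝ)) ^ (n+1) * ∏ i, (1 / (ch.1 i : ℝ))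
      = ∏ i, (1:ℝ) / (ch.1 i : ℝ) ^ ((Fin.cons (2+n) (fun _ : Fin m => 1) : Fin (m+1) → ℕ) i) := by
  rw [Fin.prod_univ_succ, Fin.prod_univ_succ]
  simp only [Fin.cons_zero, Fin.cons_succ]
  have e1 : ∀ i : Fin m, (1:ℝ) / (ch.1 i.succ : ℝ) ^ 1 = 1 / (ch.1 i.succ : ℝ) := by
    intro i; rw [pow_one]
  rw [Finset.prod_congr rfl fun i _ => e1 i]
  have e0 : hd ch = ch.1 0 := rfl
  have e2 : (1:ℝ) / ((ch.1 0 : ℝ)) ^ (2 + n)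
      = ((1:ℝ) / (ch.1 0 : ℝ)) ^ (n+1) * (1 / (ch.1 0 : ℝ)) := by
    rw [div_pow, one_pow, show 2 + n = (n + 1) + 1 by omega, pow_succ]
    rw [div_mul_div_comm, mul_one]
  simp only [e0]
  rw [e2]
  ring

lemma ZE_c_repr (n m : ℕ) : ZE 1 Nat.cast n m
    = ∑' ch : Chain (m+1), ENNReal.ofReal
        (∏ i, (1:ℝ) / (ch.1 i : ℝ) ^ ((Fin.cons (2+n) (fun _ : Fin m => 1) : Fin (m+1) → ℕ) i)) := by
  rw [ZE]
  refine tsum_congr fun ch => ?_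
  have hh' : (0:ℝ) < (hd ch : ℝ) := by exact_mod_cast hd_pos ch
  have hcL : ∀ m' : ℕ, 0 ≤ 1 / ((m' : ℕ) : ℝ) := fun m' => by positivity
  rw [xE, one_pow, ← ENNReal.ofReal_pow (by positivity), WE_eq_ofReal Nat.cast hcL,
    ← ENNReal.ofReal_mul (by positivity), cterm_eq n m ch]

include hq0 hq1 in
lemma qZeta_toReal (n m : ℕ) :
    qZeta q (Fin.cons (2+n) (fun _ : Fin m => 1)) 0 = (ZE q (qint q) n m).toReal := by
  have hnn : ∀ ch : Chain (m+1), 0 ≤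
      ∏ i, q ^ (ch.1 i * ((Fin.cons (2+n) (fun _ : Fin m => 1) : Fin (m+1) → ℕ) i - 1))
        / (qint q (ch.1 i)) ^ ((Fin.cons (2+n) (fun _ : Fin m => 1) : Fin (m+1) → ℕ) i) := by
    intro ch
    refine Finset.prod_nonneg fun i _ => ?_
    have := qint_pos hq0 hq1 (ch.2.2 i)
    positivity
  have : (ZE q (qint q) n m).toReal = ∑' ch : Chain (m+1),
      (∏ i, q ^ (ch.1 i * ((Fin.cons (2+n) (fun _ : Fin m => 1) : Fin (m+1) → ℕ) i - 1))
        / (qint q (ch.1 i)) ^ ((Fin.cons (2+n) (fun _ : Fin m => 1) : Fin (m+1) → ℕ) i)) := by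
    rw [ZE_q_repr hq0 hq1 n m, ENNReal.tsum_toReal_eq (fun _ => ENNReal.ofReal_ne_top)]
    exact tsum_congr fun ch => ENNReal.toReal_ofReal (hnn ch)
  rw [this, qZeta]
  rfl

lemma mzv_toReal (n m : ℕ) :
    mzv (Fin.cons (2+n) (fun _ : Fin m => 1)) = (ZE 1 Nat.cast n m).toReal := by
  have hnn : ∀ ch : Chain (m+1), 0 ≤
      ∏ i, (1:ℝ) / (ch.1 i : ℝ) ^ ((Fin.cons (2+n) (fun _ : Fin m => 1) : Fin (m+1) → ℕ) i) := by
    intro ch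
    refine Finset.prod_nonneg fun i _ => by positivity
  have : (ZE 1 Nat.cast n m).toReal = ∑' ch : Chain (m+1),
      (∏ i, (1:ℝ) / (ch.1 i : ℝ) ^ ((Fin.cons (2+n) (fun _ : Fin m => 1) : Fin (m+1) → ℕ) i)) := by
    rw [ZE_c_repr n m, ENNReal.tsum_toReal_eq (fun _ => ENNReal.ofReal_ne_top)]
    exact tsum_congr fun ch => ENNReal.toReal_ofReal (hnn ch)
  rw [this, mzv]
  rfl

/-! ### Final assembly -/

lemma cterm_summable (n m : ℕ) :
    Summable (fun ch : Chain (m+1) =>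
      ∏ i, (1:ℝ) / (ch.1 i : ℝ) ^ ((Fin.cons (2+n) (fun _ : Fin m => 1) : Fin (m+1) → ℕ) i)) := by
  have h := cZE_ne_top n m
  rw [ZE_c_repr n m] at h
  refine (ENNReal.summable_toReal h).congr fun ch => ?_
  exact ENNReal.toReal_ofReal (Finset.prod_nonneg fun i _ => by positivity)

include hq0 hq1 in
lemma qterm_summable (n m : ℕ) :
    Summable (fun ch : Chain (m+1) =>
      ∏ i, q ^ (ch.1 i * ((Fin.cons (2+n) (fun _ : Fin m => 1) : Fin (m+1) → ℕ) i - 1))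
        / (qint q (ch.1 i)) ^ ((Fin.cons (2+n) (fun _ : Fin m => 1) : Fin (m+1) → ℕ) i)) := by
  have h : (∑' ch : Chain (m+1), ENNReal.ofReal
      (∏ i, q ^ (ch.1 i * ((Fin.cons (2+n) (fun _ : Fin m => 1) : Fin (m+1) → ℕ) i - 1))
        / (qint q (ch.1 i)) ^ ((Fin.cons (2+n) (fun _ : Fin m => 1) : Fin (m+1) → ℕ) i))) ≠ ⊤ := by
    refine ne_top_of_le_ne_top (cZE_ne_top n m) ?_
    rw [← ZE_q_repr hq0 hq1 n m]
    exact qZE_le_cZE hq0 hq1 n m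
  refine (ENNReal.summable_toReal h).congr fun ch => ?_
  refine ENNReal.toReal_ofReal (Finset.prod_nonneg fun i _ => ?_)
  have := qint_pos hq0 hq1 (ch.2.2 i)
  positivity

lemma qterm_nonneg {p : ℝ} (hp0 : 0 < p) (hp1 : p < 1) (n m : ℕ) (ch : Chain (m+1)) :
    0 ≤ ∏ i, p ^ (ch.1 i * ((Fin.cons (2+n) (fun _ : Fin m => 1) : Fin (m+1) → ℕ) i - 1))
        / (qint p (ch.1 i)) ^ ((Fin.cons (2+n) (fun _ : Fin m => 1) : Fin (m+1) → ℕ) i) := by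
  refine Finset.prod_nonneg fun i _ => ?_
  have := qint_pos hp0 hp1 (ch.2.2 i)
  positivity

lemma qterm_tendsto (n m : ℕ) (ch : Chain (m+1)) :
    Tendsto (fun p : ℝ =>
        ∏ i, p ^ (ch.1 i * ((Fin.cons (2+n) (fun _ : Fin m => 1) : Fin (m+1) → ℕ) i - 1))
          / (qint p (ch.1 i)) ^ ((Fin.cons (2+n) (fun _ : Fin m => 1) : Fin (m+1) → ℕ) i))
      (nhdsWithin 1 (Set.Iio 1))
      (nhds (∏ i, (1:ℝ) / (ch.1 i : ℝ) ^ ((Fin.cons (2+n) (fun _ : Fin m => 1) : Fin (m+1) → ℕ) i))) := by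
  refine tendsto_finset_prod _ fun i _ => ?_
  have hm : 1 ≤ ch.1 i := ch.2.2 i
  have hqd : Tendsto (fun p : ℝ => qint p (ch.1 i)) (nhdsWithin 1 (Set.Iio 1)) (nhds ((ch.1 i : ℝ))) := by
    have hpoly : Tendsto (fun p : ℝ => ∑ j ∈ Finset.range (ch.1 i), p ^ j) (nhds (1:ℝ))
        (nhds (∑ j ∈ Finset.range (ch.1 i), (1:ℝ) ^ j)) :=
      Continuous.tendsto (by continuity) 1
    have hval : (∑ j ∈ Finset.range (ch.1 i), (1:ℝ) ^ j) = (ch.1 i : ℝ) := by simp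
    rw [hval] at hpoly
    refine Tendsto.congr' ?_ (hpoly.mono_left nhdsWithin_le_nhds)
    filter_upwards [self_mem_nhdsWithin] with p hp
    exact (qint_eq_geom hp (ch.1 i)).symm
  have hnum : Tendsto (fun p : ℝ =>
      p ^ (ch.1 i * ((Fin.cons (2+n) (fun _ : Fin m => 1) : Fin (m+1) → ℕ) i - 1)))
      (nhdsWithin 1 (Set.Iio 1)) (nhds 1) := by
    have h2 := (continuous_pow (ch.1 i * ((Fin.cons (2+n) (fun _ : Fin m => 1) : Fin (m+1) → ℕ) i - 1))).tendsto (1:ℝ)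
    rw [one_pow] at h2
    exact h2.mono_left nhdsWithin_le_nhds
  have hden : Tendsto (fun p : ℝ =>
      (qint p (ch.1 i)) ^ ((Fin.cons (2+n) (fun _ : Fin m => 1) : Fin (m+1) → ℕ) i))
      (nhdsWithin 1 (Set.Iio 1))
      (nhds ((ch.1 i : ℝ) ^ ((Fin.cons (2+n) (fun _ : Fin m => 1) : Fin (m+1) → ℕ) i))) := hqd.pow _
  have hm' : (0:ℝ) < (ch.1 i : ℝ) := by exact_mod_cast hm
  have hne : ((ch.1 i : ℝ)) ^ ((Fin.cons (2+n) (fun _ : Fin m => 1) : Fin (m+1) → ℕ) i) ≠ 0 := by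
    positivity
  exact hnum.div hden hne

end Inst

end S13

open S13

theorem stmt13 (n m : ℕ) :
    ⨆ q : Set.Ioo (0:ℝ) 1,
        qZeta (q : ℝ) (Fin.cons (2 + n) (fun _ : Fin m => 1)) 0
      = mzv (Fin.cons (2 + n) (fun _ : Fin m => 1)) := by
  haveI : Nonempty (Set.Ioo (0:ℝ) 1) := ⟨⟨1/2, by norm_num⟩⟩
  have hub : ∀ p : Set.Ioo (0:ℝ) 1,
      qZeta (p : ℝ) (Fin.cons (2 + n) (fun _ : Fin m => 1)) 0
        ≤ mzv (Fin.cons (2 + n) (fun _ : Fin m => 1)) := by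
    rintro ⟨p, hp0, hp1⟩
    rw [qZeta_toReal hp0 hp1 n m, mzv_toReal n m]
    exact ENNReal.toReal_mono (cZE_ne_top n m) (qZE_le_cZE hp0 hp1 n m)
  have hbdd : BddAbove (Set.range fun p : Set.Ioo (0:ℝ) 1 =>
      qZeta (p : ℝ) (Fin.cons (2 + n) (fun _ : Fin m => 1)) 0) := by
    refine ⟨mzv (Fin.cons (2 + n) (fun _ : Fin m => 1)), ?_⟩
    rintro x ⟨p, rfl⟩
    exact hub p
  refine le_antisymm (ciSup_le hub) ?_
  -- lower bound
  set S := ⨆ q : Set.Ioo (0:ℝ) 1,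
      qZeta (q : ℝ) (Fin.cons (2 + n) (fun _ : Fin m => 1)) 0 with hS
  rw [mzv]
  refine Summable.tsum_le_of_sum_le (cterm_summable n m) ?_
  intro F
  have hlim : Tendsto (fun p : ℝ => ∑ ch ∈ F,
      ∏ i, p ^ (ch.1 i * ((Fin.cons (2+n) (fun _ : Fin m => 1) : Fin (m+1) → ℕ) i - 1))
        / (qint p (ch.1 i)) ^ ((Fin.cons (2+n) (fun _ : Fin m => 1) : Fin (m+1) → ℕ) i))
      (nhdsWithin 1 (Set.Iio 1))
      (nhds (∑ ch ∈ F,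
        ∏ i, (1:ℝ) / (ch.1 i : ℝ) ^ ((Fin.cons (2+n) (fun _ : Fin m => 1) : Fin (m+1) → ℕ) i))) :=
    tendsto_finset_sum F fun ch _ => qterm_tendsto n m ch
  refine le_of_tendsto hlim ?_
  have hIoo : Set.Ioo (0:ℝ) 1 ∈ nhdsWithin (1:ℝ) (Set.Iio 1) :=
    Ioo_mem_nhdsLT_of_mem (by norm_num : (1:ℝ) ∈ Set.Ioc (0:ℝ) 1)
  filter_upwards [hIoo] with p hp
  calc (∑ ch ∈ F,
      ∏ i, p ^ (ch.1 i * ((Fin.cons (2+n) (fun _ : Fin m => 1) : Fin (m+1) → ℕ) i - 1))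
        / (qint p (ch.1 i)) ^ ((Fin.cons (2+n) (fun _ : Fin m => 1) : Fin (m+1) → ℕ) i))
      ≤ ∑' ch : Chain (m+1),
          ∏ i, p ^ (ch.1 i * ((Fin.cons (2+n) (fun _ : Fin m => 1) : Fin (m+1) → ℕ) i - 1))
            / (qint p (ch.1 i)) ^ ((Fin.cons (2+n) (fun _ : Fin m => 1) : Fin (m+1) → ℕ) i) :=
        Summable.sum_le_tsum (L := SummationFilter.unconditional _) F (fun ch _ => qterm_nonneg hp.1 hp.2 n m ch)
          (qterm_summable hp.1 hp.2 n m)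
    _ = qZeta (p : ℝ) (Fin.cons (2 + n) (fun _ : Fin m => 1)) 0 := by rw [qZeta]; rfl
    _ ≤ S := le_ciSup hbdd (⟨p, hp⟩ : Set.Ioo (0:ℝ) 1)
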